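/- Let G be a metric space with the intermediate-point property (for x,y ∈ G and λ ∈ (0,1) there is m with d(x,m)=λd(x,y), d(m,y)=(1−λ)d(x,y)). If f : G → ℝ is bounded uniformly continuous with modulus ω (|f(x)−f(y)| ≤ ε whenever d(x,y) ≤ δ(ε)), then for each t ≥ 0 the function S(t)f defined by (S(t)f)(x) := sup_{d(x,y)≤t} f(y) is uniformly continuous with the same modulus: |S(t)f(x) − S(t)f(y)| ≤ ε whenever d(x,y) ≤ δ(ε). Moreover ‖S(t)f − f‖_∞ ≤ sup_{d(x,y)≤t}|f(x)−f(y)|, so S(t)f → f uniformly as t ↓ 0. -/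

import Mathlib

/-- The uncertain shift semigroup on a metric space `G`:
`(S t f) x = sup_{dist x y ≤ t} f y`. -/
noncomputable def MS {G : Type*} [MetricSpace G] (t : ℝ) (f : G → ℝ) (x : G) : ℝ :=
  sSup {z : ℝ | ∃ y : G, dist x y ≤ t ∧ z = f y}

/-- On a metric space with the intermediate-point property, `S(t)f` has the same modulus of
continuity as a bounded uniformly continuous `f`; moreover
`‖S(t)f - f‖_∞ ≤ sup_{dist a b ≤ t} |f a - f b|`, so `S(t)f → f` uniformly as `t ↓ 0`. -/
theorem stmt19 {G : Type*} [MetricSpace G]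
    (hgeo : ∀ x y : G, ∀ l : ℝ, 0 < l → l < 1 → ∃ m : G,
      dist x m = l * dist x y ∧ dist m y = (1 - l) * dist x y)
    (f : G → ℝ) (C : ℝ) (hb : ∀ x, |f x| ≤ C) (hu : UniformContinuous f) :
    (∀ ε δ : ℝ, 0 < ε → (∀ a b : G, dist a b ≤ δ → |f a - f b| ≤ ε) →
      ∀ t : ℝ, 0 ≤ t → ∀ x y : G, dist x y ≤ δ → |MS t f x - MS t f y| ≤ ε) ∧
    (∀ t : ℝ, 0 ≤ t → ∀ x : G,
      |MS t f x - f x| ≤ sSup {r : ℝ | ∃ a b : G, dist a b ≤ t ∧ r = |f a - f b|}) ∧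
    (∀ ε : ℝ, 0 < ε → ∃ δ > (0 : ℝ), ∀ t : ℝ, 0 ≤ t → t ≤ δ → ∀ x : G,
      |MS t f x - f x| ≤ ε) := by
  have hbdd : ∀ (t : ℝ) (x : G), BddAbove {z : ℝ | ∃ y : G, dist x y ≤ t ∧ z = f y} := by
    intro t x
    exact ⟨C, by rintro z ⟨y, _, rfl⟩; exact (abs_le.1 (hb y)).2⟩
  have hne : ∀ (t : ℝ), 0 ≤ t → ∀ x : G,
      Set.Nonempty {z : ℝ | ∃ y : G, dist x y ≤ t ∧ z = f y} :=
    fun t ht x => ⟨f x, x, by simpa using ht, rfl⟩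
  have hmem : ∀ (t : ℝ) (x y : G), dist x y ≤ t → f y ≤ MS t f x := by
    intro t x y h
    exact le_csSup (hbdd t x) ⟨y, h, rfl⟩
  -- key one-sided estimate
  have key : ∀ ε δ : ℝ, 0 < ε → (∀ a b : G, dist a b ≤ δ → |f a - f b| ≤ ε) →
      ∀ t : ℝ, 0 ≤ t → ∀ x y : G, dist x y ≤ δ → MS t f x ≤ MS t f y + ε := by
    intro ε δ hε hmod t ht x y hxy
    apply csSup_le (hne t ht x)
    rintro z ⟨w, hw, rfl⟩
    by_cases hxy0 : dist x y ≤ 0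
    · have : x = y := by
        have := dist_nonneg (x := x) (y := y)
        exact dist_le_zero.1 (le_antisymm hxy0 this ▸ hxy0)
      subst this
      have := hmem t x w hw
      linarith
    push_neg at hxy0
    have hδ : 0 < δ := lt_of_lt_of_le hxy0 hxy
    rcases eq_or_lt_of_le ht with ht0 | htpos
    · -- t = 0, so w = x
      have hwx : x = w := by rw [← ht0] at hw; exact dist_le_zero.1 hw
      subst hwx
      have h1 : |f x - f y| ≤ ε := hmod x y hxy
      have h2 : f y ≤ MS t f y := hmem t y y (by simpa using ht)
      have := (abs_le.1 h1).2
      linarith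
    · set l : ℝ := t / (t + δ) with hl
      have htδ : 0 < t + δ := by linarith
      have hl0 : 0 < l := div_pos htpos htδ
      have hl1 : l < 1 := (div_lt_one htδ).2 (by linarith)
      obtain ⟨m, hm1, hm2⟩ := hgeo y w l hl0 hl1
      have hyw : dist y w ≤ t + δ := by
        calc dist y w ≤ dist y x + dist x w := dist_triangle y x w
        _ ≤ δ + t := by rw [dist_comm y x]; linarith
        _ = t + δ := by ring
      have hym : dist y m ≤ t := by
        rw [hm1]
        calc l * dist y w ≤ l * (t + δ) := by
              exact mul_le_mul_of_nonneg_left hyw hl0.le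
        _ = t := by rw [hl]; field_simp
      have hmw : dist m w ≤ δ := by
        rw [hm2]
        have h1l : 0 ≤ 1 - l := by linarith
        calc (1 - l) * dist y w ≤ (1 - l) * (t + δ) := mul_le_mul_of_nonneg_left hyw h1l
        _ = δ := by rw [hl]; field_simp; ring
      have h1 : |f m - f w| ≤ ε := hmod m w hmw
      have h2 : f m ≤ MS t f y := hmem t y m hym
      have := (abs_le.1 h1).1
      linarith
  refine ⟨?_, ?_, ?_⟩
  · intro ε δ hε hmod t ht x y hxy
    have h1 := key ε δ hε hmod t ht x y hxy
    have h2 := key ε δ hε hmod t ht y x (by rwa [dist_comm])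
    rw [abs_le]
    constructor <;> linarith
  · intro t ht x
    set R := {r : ℝ | ∃ a b : G, dist a b ≤ t ∧ r = |f a - f b|} with hR
    have hRne : R.Nonempty := ⟨|f x - f x|, x, x, by simpa using ht, rfl⟩
    have hRbdd : BddAbove R := by
      refine ⟨2 * C, ?_⟩
      rintro r ⟨a, b, _, rfl⟩
      calc |f a - f b| ≤ |f a| + |f b| := abs_sub _ _
      _ ≤ C + C := add_le_add (hb a) (hb b)
      _ = 2 * C := by ring
    have hD0 : (0 : ℝ) ≤ sSup R := by
      have : |f x - f x| ≤ sSup R := le_csSup hRbdd ⟨x, x, by simpa using ht, rfl⟩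
      simpa using this
    have hub : MS t f x ≤ f x + sSup R := by
      apply csSup_le (hne t ht x)
      rintro z ⟨w, hw, rfl⟩
      have : |f w - f x| ≤ sSup R := le_csSup hRbdd ⟨w, x, by rwa [dist_comm], rfl⟩
      have := (abs_le.1 this).2
      linarith
    have hlb : f x ≤ MS t f x := hmem t x x (by simpa using ht)
    rw [abs_le]
    constructor <;> linarith
  · intro ε hε
    obtain ⟨δ, hδ, hδ'⟩ := Metric.uniformContinuous_iff.1 hu ε hε
    refine ⟨δ / 2, by linarith, fun t ht htδ x => ?_⟩
    have hmod : ∀ a b : G, dist a b ≤ t → |f a - f b| ≤ ε := by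
      intro a b hab
      have : dist a b < δ := by linarith
      exact le_of_lt (by simpa [Real.dist_eq] using hδ' this)
    set R := {r : ℝ | ∃ a b : G, dist a b ≤ t ∧ r = |f a - f b|} with hR
    have hRne : R.Nonempty := ⟨|f x - f x|, x, x, by simpa using ht, rfl⟩
    have hsup : sSup R ≤ ε := by
      apply csSup_le hRne
      rintro r ⟨a, b, hab, rfl⟩
      exact hmod a b hab
    have key2 : ∀ ε' δ' : ℝ, 0 < ε' → (∀ a b : G, dist a b ≤ δ' → |f a - f b| ≤ ε') →
        True := fun _ _ _ _ => trivial
    -- use part 2 bound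
    have h2 : |MS t f x - f x| ≤ sSup R := by
      have hRbdd : BddAbove R := by
        refine ⟨2 * C, ?_⟩
        rintro r ⟨a, b, _, rfl⟩
        calc |f a - f b| ≤ |f a| + |f b| := abs_sub _ _
        _ ≤ C + C := add_le_add (hb a) (hb b)
        _ = 2 * C := by ring
      have hub : MS t f x ≤ f x + sSup R := by
        apply csSup_le (hne t ht x)
        rintro z ⟨w, hw, rfl⟩
        have : |f w - f x| ≤ sSup R := le_csSup hRbdd ⟨w, x, by rwa [dist_comm], rfl⟩
        have := (abs_le.1 this).2
        linarith
      have hlb : f x ≤ MS t f x := hmem t x x (by simpa using ht)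
      have hD0 : (0 : ℝ) ≤ sSup R := by
        have : |f x - f x| ≤ sSup R := le_csSup hRbdd ⟨x, x, by simpa using ht, rfl⟩
        simpa using this
      rw [abs_le]; constructor <;> linarith
    linarith
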